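/- arXiv:2010.02611 — 12 statements merged into one kernel-verified Lean document; each statement's English description precedes it below -/
import Mathlib

section
/- Let ξ: (g,⟨,⟩₁) → (h,⟨,⟩₂) be a Lie algebra homomorphism between metric Lie algebras with g unimodular. Then for every u ∈ h, ⟨τ(ξ), u⟩₂ = tr(ξ* ∘ ad_u ∘ ξ), where τ(ξ) = Σ_i B_{ξ(e_i)} ξ(e_i) for an orthonormal basis (e_i) of g, B is the Levi-Civita product of (h,⟨,⟩₂), and ξ* is the adjoint of ξ with respect to the two inner products. -/
open RealInnerProductSpace

lemma trace_eq_sum_inner_aux {g : Type*} [NormedAddCommGroup g] [InnerProductSpace ℝ g]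
    [FiniteDimensional ℝ g] {ι : Type*} [Fintype ι] (e : OrthonormalBasis ι ℝ g)
    (T : g →ₗ[ℝ] g) : LinearMap.trace ℝ g T = ∑ i, ⟪e i, T (e i)⟫ := by
  classical
  rw [LinearMap.trace_eq_matrix_trace ℝ e.toBasis, Matrix.trace]
  simp [Matrix.diag, LinearMap.toMatrix_apply, OrthonormalBasis.coe_toBasis,
    OrthonormalBasis.coe_toBasis_repr_apply, OrthonormalBasis.repr_apply_apply,
    real_inner_comm]

/-- For a Lie algebra homomorphism `ξ` between metric Lie algebras with unimodular source,
`⟨τ(ξ), u⟩₂ = tr(ξ* ∘ ad_u ∘ ξ)`, where `τ(ξ) = Σ_i B_{ξ(e_i)} ξ(e_i)`. -/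
theorem tension_field_inner_eq_trace
    {g h : Type*} [NormedAddCommGroup g] [InnerProductSpace ℝ g] [FiniteDimensional ℝ g]
    [NormedAddCommGroup h] [InnerProductSpace ℝ h] [FiniteDimensional ℝ h]
    (Lg : g →ₗ[ℝ] g →ₗ[ℝ] g) (Lh : h →ₗ[ℝ] h →ₗ[ℝ] h)
    (hLg_alt : ∀ u, Lg u u = 0)
    (hLg_jacobi : ∀ u v w, Lg u (Lg v w) + Lg v (Lg w u) + Lg w (Lg u v) = 0)
    (hLh_alt : ∀ u, Lh u u = 0)
    (hLh_jacobi : ∀ u v w, Lh u (Lh v w) + Lh v (Lh w u) + Lh w (Lh u v) = 0)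
    (hg_unimodular : ∀ v, LinearMap.trace ℝ g (Lg v) = 0)
    (ξ : g →ₗ[ℝ] h)
    (hξ : ∀ u v, ξ (Lg u v) = Lh (ξ u) (ξ v))
    (B : h → h → h)
    (hB : ∀ u v w, 2 * ⟪B u v, w⟫ = ⟪Lh u v, w⟫ + ⟪Lh w u, v⟫ + ⟪Lh w v, u⟫)
    {ι : Type*} [Fintype ι] (e : OrthonormalBasis ι ℝ g) :
    ∀ u : h, ⟪∑ i, B (ξ (e i)) (ξ (e i)), u⟫ =
      LinearMap.trace ℝ g (LinearMap.adjoint ξ ∘ₗ Lh u ∘ₗ ξ) := by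
  intro u
  rw [trace_eq_sum_inner_aux e, sum_inner]
  refine Finset.sum_congr rfl fun i _ => ?_
  have key : ∀ v : h, ⟪B v v, u⟫ = ⟪Lh u v, v⟫ := by
    intro v
    have := hB v v u
    rw [hLh_alt v] at this
    simp only [inner_zero_left] at this
    linarith
  rw [key, LinearMap.comp_apply, LinearMap.comp_apply,
    real_inner_comm, LinearMap.adjoint_inner_right]
end

section
/- Let n be the 3-dimensional Heisenberg Lie algebra with basis (X₁,X₂,X₃) and [X₁,X₂]=X₃, endowed with source metric diag(λ₁,λ₁,1) and target metric diag(λ₂,λ₂,1) in this basis (λ₁,λ₂>0). For the homomorphism ξ with matrix columns (α₁,β₁,α₃), (α₂,β₂,β₃), (0,0,α₁β₂−α₂β₁), the tension field equals τ(ξ) = ((α₃β₁+β₃β₂)/(λ₁λ₂)) X₁ − ((α₃α₁+β₃α₂)/(λ₁λ₂)) X₂. -/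
noncomputable section

/-- Diagonal inner product on `ℝ³` with diagonal `d`. -/
def ip (d : Fin 3 → ℝ) (u v : Fin 3 → ℝ) : ℝ :=
  d 0 * u 0 * v 0 + d 1 * u 1 * v 1 + d 2 * u 2 * v 2

/-- The Heisenberg bracket: `[X₁,X₂] = X₃`. -/
def brN (u v : Fin 3 → ℝ) : Fin 3 → ℝ :=
  ![0, 0, u 0 * v 1 - u 1 * v 0]

/-- For the Heisenberg algebra with metrics `diag(λ₁,λ₁,1)` and `diag(λ₂,λ₂,1)` and
the homomorphism with matrix rows `(α₁,α₂,0),(β₁,β₂,0),(α₃,β₃,α₁β₂−α₂β₁)`,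
`τ(ξ) = ((α₃β₁+β₃β₂)/(λ₁λ₂)) X₁ − ((α₃α₁+β₃α₂)/(λ₁λ₂)) X₂`. -/
theorem heisenberg_tension_field
    (l1 l2 : ℝ) (hl1 : 0 < l1) (hl2 : 0 < l2)
    (α1 α2 α3 β1 β2 β3 : ℝ)
    (ξ : (Fin 3 → ℝ) → (Fin 3 → ℝ))
    (hξ : ξ = fun u => ![α1 * u 0 + α2 * u 1, β1 * u 0 + β2 * u 1,
      α3 * u 0 + β3 * u 1 + (α1 * β2 - α2 * β1) * u 2])
    (B : (Fin 3 → ℝ) → (Fin 3 → ℝ) → (Fin 3 → ℝ))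
    -- B is the Levi-Civita product of the target metric diag(λ₂,λ₂,1)
    (hB : ∀ u v w, 2 * ip ![l2, l2, 1] (B u v) w =
      ip ![l2, l2, 1] (brN u v) w + ip ![l2, l2, 1] (brN w u) v + ip ![l2, l2, 1] (brN w v) u)
    (τ : Fin 3 → ℝ)
    -- τ(ξ) = Σ_i B_{ξ(e_i)} ξ(e_i) for the orthonormal basis of diag(λ₁,λ₁,1)
    (hτ : τ = B (ξ ![Real.sqrt (1/l1), 0, 0]) (ξ ![Real.sqrt (1/l1), 0, 0])
            + B (ξ ![0, Real.sqrt (1/l1), 0]) (ξ ![0, Real.sqrt (1/l1), 0])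
            + B (ξ ![0, 0, 1]) (ξ ![0, 0, 1])) :
    τ = ![(α3 * β1 + β3 * β2) / (l1 * l2), -((α3 * α1 + β3 * α2) / (l1 * l2)), 0] := by

  have hl1' : l1 ≠ 0 := ne_of_gt hl1
  have hl2' : l2 ≠ 0 := ne_of_gt hl2
  have hs : Real.sqrt (1/l1) * Real.sqrt (1/l1) = 1/l1 :=
    Real.mul_self_sqrt (by positivity)
  have hB0 : ∀ u v : Fin 3 → ℝ, B u v 0 = (u 1 * v 2 + v 1 * u 2) / (2 * l2) := by
    intro u v
    have h := hB u v ![1, 0, 0]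
    simp [ip, brN] at h
    field_simp
    linarith
  have hB1 : ∀ u v : Fin 3 → ℝ, B u v 1 = -((u 0 * v 2 + v 0 * u 2) / (2 * l2)) := by
    intro u v
    have h := hB u v ![0, 1, 0]
    simp [ip, brN] at h
    field_simp
    linarith
  have hB2 : ∀ u v : Fin 3 → ℝ, B u v 2 = (u 0 * v 1 - u 1 * v 0) / 2 := by
    intro u v
    have h := hB u v ![0, 0, 1]
    simp [ip, brN] at h
    field_simp
    linarith
  subst hξ hτ
  funext i
  fin_cases i
  · simp [hB0]
    field_simp
    ring_nf
    rw [Real.sq_sqrt hl1.le]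
  · simp [hB1]
    field_simp
    ring_nf
    rw [Real.sq_sqrt hl1.le]
  · simp [hB2]
    ring
end
end

section
/- Let e₀(2) be the Lie algebra with basis (X₁,X₂,X₃) and brackets [X₃,X₁]=X₂, [X₃,X₂]=−X₁, with source metric diag(1,μ₁,ν₁) and target metric diag(1,μ₂,ν₂). The homomorphism ξ mapping X₁↦αX₁+βX₂, X₂↦−βX₁+αX₂, X₃↦aX₁+bX₂+X₃ has tension field τ(ξ) = −(μ₂b/ν₁)X₁ + (a/(μ₂ν₁))X₂ + ((μ₂−1)(αβν₁(μ₁−1)+abμ₁)/(μ₁ν₁ν₂))X₃. -/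
noncomputable section

/-- The bracket of `e₀(2)`: `[X₃,X₁] = X₂`, `[X₃,X₂] = −X₁`. -/
def brE (u v : Fin 3 → ℝ) : Fin 3 → ℝ :=
  ![u 1 * v 2 - u 2 * v 1, u 2 * v 0 - u 0 * v 2, 0]

/-- For `e₀(2)` with metrics `diag(1,μ₁,ν₁)` and `diag(1,μ₂,ν₂)`, the homomorphism
`X₁↦αX₁+βX₂, X₂↦−βX₁+αX₂, X₃↦aX₁+bX₂+X₃` has tension field
`τ(ξ) = −(μ₂b/ν₁)X₁ + (a/(μ₂ν₁))X₂ + ((μ₂−1)(αβν₁(μ₁−1)+abμ₁)/(μ₁ν₁ν₂))X₃`. -/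
theorem e02_tension_field
    (μ1 μ2 ν1 ν2 : ℝ) (hμ1 : 0 < μ1) (hμ1' : μ1 ≤ 1) (hμ2 : 0 < μ2) (hμ2' : μ2 ≤ 1)
    (hν1 : 0 < ν1) (hν2 : 0 < ν2)
    (α β a b : ℝ)
    (ξ : (Fin 3 → ℝ) → (Fin 3 → ℝ))
    (hξ : ξ = fun u => ![α * u 0 - β * u 1 + a * u 2, β * u 0 + α * u 1 + b * u 2, u 2])
    (B : (Fin 3 → ℝ) → (Fin 3 → ℝ) → (Fin 3 → ℝ))
    -- B is the Levi-Civita product of the target metric diag(1,μ₂,ν₂)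
    (hB : ∀ u v w, 2 * ip ![1, μ2, ν2] (B u v) w =
      ip ![1, μ2, ν2] (brE u v) w + ip ![1, μ2, ν2] (brE w u) v + ip ![1, μ2, ν2] (brE w v) u)
    (τ : Fin 3 → ℝ)
    -- τ(ξ) = Σ_i B_{ξ(e_i)} ξ(e_i) for the orthonormal basis of diag(1,μ₁,ν₁)
    (hτ : τ = B (ξ ![1, 0, 0]) (ξ ![1, 0, 0])
            + B (ξ ![0, Real.sqrt (1/μ1), 0]) (ξ ![0, Real.sqrt (1/μ1), 0])
            + B (ξ ![0, 0, Real.sqrt (1/ν1)]) (ξ ![0, 0, Real.sqrt (1/ν1)])) :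
    τ = ![-(μ2 * b / ν1), a / (μ2 * ν1),
          (μ2 - 1) * (α * β * ν1 * (μ1 - 1) + a * b * μ1) / (μ1 * ν1 * ν2)] := by

  subst hξ hτ
  have hμ2' : μ2 ≠ 0 := ne_of_gt hμ2
  have hν2' : ν2 ≠ 0 := ne_of_gt hν2
  have key : ∀ u v : Fin 3 → ℝ, B u v =
      ![(u 1 * v 2 - u 2 * v 1 - μ2 * u 2 * v 1 - μ2 * v 2 * u 1) / 2,
        (μ2 * (u 2 * v 0 - u 0 * v 2) + u 2 * v 0 + v 2 * u 0) / (2 * μ2),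
        (μ2 - 1) * (u 0 * v 1 + u 1 * v 0) / (2 * ν2)] := by
    intro u v
    funext i
    fin_cases i
    · have h := hB u v ![1, 0, 0]
      simp only [ip, brE] at h ⊢
      simp at h ⊢
      linarith
    · have h := hB u v ![0, 1, 0]
      simp only [ip, brE] at h ⊢
      simp at h ⊢
      field_simp
      linarith
    · have h := hB u v ![0, 0, 1]
      simp only [ip, brE] at h ⊢
      simp at h ⊢
      field_simp
      linarith
  have hs : Real.sqrt (1/μ1) * Real.sqrt (1/μ1) = 1/μ1 :=
    Real.mul_self_sqrt (by positivity)
  have ht : Real.sqrt (1/ν1) * Real.sqrt (1/ν1) = 1/ν1 :=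
    Real.mul_self_sqrt (by positivity)
  funext i
  fin_cases i <;>
  · simp [key, Pi.add_apply]
    field_simp
    simp only [Real.sq_sqrt hμ1.le, Real.sq_sqrt hν1.le]
    nlinarith [hs, ht, sq_nonneg (Real.sqrt (1/μ1)), sq_nonneg (Real.sqrt (1/ν1))]
end
end

section
/- Let e₀(2) carry source metric diag(1,μ₁,ν₁) and target metric diag(1,μ₂,ν₂) (0<μᵢ≤1, νᵢ>0), and let ξ be the homomorphism X₁↦0, X₂↦0, X₃↦aX₁+bX₂ (γ=0). Then the bitension field satisfies τ₂(ξ) = (a−b)(a+b)(μ₂−1)² a b/(ν₁²ν₂²) · X₃, and hence ξ is biharmonic but not harmonic if and only if a² = b², ab ≠ 0, and μ₂ ≠ 1. -/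
noncomputable section

/-- For `e₀(2)` with metrics `diag(1,μ₁,ν₁)`, `diag(1,μ₂,ν₂)` and the homomorphism
`X₁↦0, X₂↦0, X₃↦aX₁+bX₂`, one has
`τ₂(ξ) = (a−b)(a+b)(μ₂−1)²ab/(ν₁²ν₂²) X₃`, so `ξ` is biharmonic but not harmonic
iff `a² = b²`, `ab ≠ 0` and `μ₂ ≠ 1`. -/
theorem e02_biharmonic_not_harmonic
    (μ1 μ2 ν1 ν2 : ℝ) (hμ1 : 0 < μ1) (hμ1' : μ1 ≤ 1) (hμ2 : 0 < μ2) (hμ2' : μ2 ≤ 1)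
    (hν1 : 0 < ν1) (hν2 : 0 < ν2)
    (a b : ℝ)
    (ξ : (Fin 3 → ℝ) → (Fin 3 → ℝ))
    (hξ : ξ = fun u => ![a * u 2, b * u 2, 0])
    (B : (Fin 3 → ℝ) → (Fin 3 → ℝ) → (Fin 3 → ℝ))
    -- B is the Levi-Civita product of the target metric diag(1,μ₂,ν₂)
    (hB : ∀ u v w, 2 * ip ![1, μ2, ν2] (B u v) w =
      ip ![1, μ2, ν2] (brE u v) w + ip ![1, μ2, ν2] (brE w u) v + ip ![1, μ2, ν2] (brE w v) u)
    -- K is the curvature of the target: K(u,v)w = B_u B_v w − B_v B_u w − B_{[u,v]} w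
    (K : (Fin 3 → ℝ) → (Fin 3 → ℝ) → (Fin 3 → ℝ) → (Fin 3 → ℝ))
    (hK : ∀ u v w, K u v w = B u (B v w) - B v (B u w) - B (brE u v) w)
    (τ τ₂ : Fin 3 → ℝ)
    -- τ(ξ) = Σ_i B_{ξ(e_i)} ξ(e_i) for the orthonormal basis e of diag(1,μ₁,ν₁)
    (hτ : τ = B (ξ ![1, 0, 0]) (ξ ![1, 0, 0])
            + B (ξ ![0, Real.sqrt (1/μ1), 0]) (ξ ![0, Real.sqrt (1/μ1), 0])
            + B (ξ ![0, 0, Real.sqrt (1/ν1)]) (ξ ![0, 0, Real.sqrt (1/ν1)]))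
    -- τ₂(ξ) = −Σ_i (B_{ξ(e_i)} B_{ξ(e_i)} τ(ξ) + K(τ(ξ),ξ(e_i))ξ(e_i))
    (hτ₂ : τ₂ = -(B (ξ ![1, 0, 0]) (B (ξ ![1, 0, 0]) τ) + K τ (ξ ![1, 0, 0]) (ξ ![1, 0, 0])
      + B (ξ ![0, Real.sqrt (1/μ1), 0]) (B (ξ ![0, Real.sqrt (1/μ1), 0]) τ)
        + K τ (ξ ![0, Real.sqrt (1/μ1), 0]) (ξ ![0, Real.sqrt (1/μ1), 0])
      + B (ξ ![0, 0, Real.sqrt (1/ν1)]) (B (ξ ![0, 0, Real.sqrt (1/ν1)]) τ)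
        + K τ (ξ ![0, 0, Real.sqrt (1/ν1)]) (ξ ![0, 0, Real.sqrt (1/ν1)]))) :
    τ₂ = ![0, 0, (a - b) * (a + b) * (μ2 - 1)^2 * a * b / (ν1^2 * ν2^2)] ∧
      ((τ₂ = 0 ∧ τ ≠ 0) ↔ (a^2 = b^2 ∧ a * b ≠ 0 ∧ μ2 ≠ 1)) := by
  have hμ2ne : μ2 ≠ 0 := ne_of_gt hμ2
  have hν2ne : ν2 ≠ 0 := ne_of_gt hν2
  have hν1ne : ν1 ≠ 0 := ne_of_gt hν1
  -- explicit formula for B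
  have hBf : ∀ u v : Fin 3 → ℝ, B u v =
      ![((1 - μ2) * u 1 * v 2 - (1 + μ2) * u 2 * v 1) / 2,
        ((1 + μ2) * u 2 * v 0 + (1 - μ2) * u 0 * v 2) / (2 * μ2),
        (μ2 - 1) * (u 0 * v 1 + u 1 * v 0) / (2 * ν2)] := by
    intro u v
    funext i
    fin_cases i
    · have h := hB u v ![1, 0, 0]
      simp [ip, brE] at h ⊢
      linarith
    · have h := hB u v ![0, 1, 0]
      simp [ip, brE] at h ⊢
      field_simp
      linarith
    · have h := hB u v ![0, 0, 1]
      simp [ip, brE] at h ⊢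
      field_simp
      linarith
  set s : ℝ := Real.sqrt (1/ν1) with hsdef
  have hsq : s * s = 1/ν1 := Real.mul_self_sqrt (by positivity)
  -- values of ξ on the orthonormal basis
  have hξ1 : ξ ![1, 0, 0] = ![0, 0, 0] := by
    rw [hξ]; funext i; fin_cases i <;> simp
  have hξ2 : ξ ![0, Real.sqrt (1/μ1), 0] = ![0, 0, 0] := by
    rw [hξ]; funext i; fin_cases i <;> simp
  have hξ3 : ξ ![0, 0, s] = ![a * s, b * s, 0] := by
    rw [hξ]; funext i; fin_cases i <;> simp
  -- B with a zero argument vanishes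
  have hBz : ∀ v, B ![(0:ℝ), 0, 0] v = ![0, 0, 0] := by
    intro v; rw [hBf]; funext i; fin_cases i <;> simp
  have hBz' : ∀ u, B u ![(0:ℝ), 0, 0] = ![0, 0, 0] := by
    intro u; rw [hBf]; funext i; fin_cases i <;> simp
  have hKz : ∀ u, K u ![(0:ℝ), 0, 0] ![(0:ℝ), 0, 0] = ![0, 0, 0] := by
    intro u
    rw [hK, hBz, hBz' u, hBz', hBz']
    funext i; fin_cases i <;> simp
  set t : ℝ := (μ2 - 1) * a * b / (ν1 * ν2) with htdef
  -- B_w w = τ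
  have hww : B ![a * s, b * s, 0] ![a * s, b * s, 0] = ![0, 0, t] := by
    rw [hBf]; funext i; fin_cases i
    · simp
    · simp
    · show (μ2 - 1) * (a * s * (b * s) + b * s * (a * s)) / (2 * ν2) = t
      rw [show (μ2 - 1) * (a * s * (b * s) + b * s * (a * s)) / (2 * ν2)
          = ((μ2 - 1) * a * b / ν2) * (s * s) by ring, hsq, htdef]
      ring
  have hτ' : τ = ![0, 0, t] := by
    rw [hτ, hξ1, hξ2, hξ3, hBz, hww]
    funext i; fin_cases i <;> simp
  -- intermediate products
  have h1 : B ![a * s, b * s, 0] ![(0:ℝ), 0, t] =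
      ![(1 - μ2) * b * s * t / 2, (1 - μ2) * a * s * t / (2 * μ2), 0] := by
    rw [hBf]; funext i; fin_cases i
    · show ((1 - μ2) * (b * s) * t - (1 + μ2) * 0 * 0) / 2 = (1 - μ2) * b * s * t / 2
      ring
    · show ((1 + μ2) * 0 * 0 + (1 - μ2) * (a * s) * t) / (2 * μ2) = (1 - μ2) * a * s * t / (2 * μ2)
      ring
    · show (μ2 - 1) * (a * s * 0 + b * s * 0) / (2 * ν2) = 0
      ring
  have h2 : B ![a * s, b * s, 0] ![(1 - μ2) * b * s * t / 2, (1 - μ2) * a * s * t / (2 * μ2), 0] =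
      ![0, 0, -((1 - μ2)^2 * t * (a^2 + μ2 * b^2)) / (4 * μ2 * ν2 * ν1)] := by
    rw [hBf]; funext i; fin_cases i
    · show ((1 - μ2) * (b * s) * 0 - (1 + μ2) * 0 * ((1 - μ2) * a * s * t / (2 * μ2))) / 2 = 0
      ring
    · show ((1 + μ2) * 0 * ((1 - μ2) * b * s * t / 2) + (1 - μ2) * (a * s) * 0) / (2 * μ2) = 0
      ring
    · show (μ2 - 1) * (a * s * ((1 - μ2) * a * s * t / (2 * μ2)) + b * s * ((1 - μ2) * b * s * t / 2)) / (2 * ν2) =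
        -((1 - μ2)^2 * t * (a^2 + μ2 * b^2)) / (4 * μ2 * ν2 * ν1)
      rw [show (μ2 - 1) * (a * s * ((1 - μ2) * a * s * t / (2 * μ2)) + b * s * ((1 - μ2) * b * s * t / 2)) / (2 * ν2)
          = ((μ2 - 1) * (1 - μ2) * t * (a^2 / (2 * μ2) + b^2 / 2) / (2 * ν2)) * (s * s) by ring, hsq]
      field_simp
      ring
  have h3 : B ![(0:ℝ), 0, t] ![a * s, b * s, 0] =
      ![-((1 + μ2) * t * b * s) / 2, (1 + μ2) * t * a * s / (2 * μ2), 0] := by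
    rw [hBf]; funext i; fin_cases i
    · show ((1 - μ2) * 0 * 0 - (1 + μ2) * t * (b * s)) / 2 = -((1 + μ2) * t * b * s) / 2
      ring
    · show ((1 + μ2) * t * (a * s) + (1 - μ2) * 0 * 0) / (2 * μ2) = (1 + μ2) * t * a * s / (2 * μ2)
      ring
    · show (μ2 - 1) * (0 * (b * s) + 0 * (a * s)) / (2 * ν2) = 0
      ring
  have h4 : B ![a * s, b * s, 0] ![-((1 + μ2) * t * b * s) / 2, (1 + μ2) * t * a * s / (2 * μ2), 0] =
      ![0, 0, (μ2 - 1) * (1 + μ2) * t * (a^2 - μ2 * b^2) / (4 * μ2 * ν2 * ν1)] := by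
    rw [hBf]; funext i; fin_cases i
    · show ((1 - μ2) * (b * s) * 0 - (1 + μ2) * 0 * ((1 + μ2) * t * a * s / (2 * μ2))) / 2 = 0
      ring
    · show ((1 + μ2) * 0 * (-((1 + μ2) * t * b * s) / 2) + (1 - μ2) * (a * s) * 0) / (2 * μ2) = 0
      ring
    · show (μ2 - 1) * (a * s * ((1 + μ2) * t * a * s / (2 * μ2)) + b * s * (-((1 + μ2) * t * b * s) / 2)) / (2 * ν2) =
        (μ2 - 1) * (1 + μ2) * t * (a^2 - μ2 * b^2) / (4 * μ2 * ν2 * ν1)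
      rw [show (μ2 - 1) * (a * s * ((1 + μ2) * t * a * s / (2 * μ2)) + b * s * (-((1 + μ2) * t * b * s) / 2)) / (2 * ν2)
          = ((μ2 - 1) * (1 + μ2) * t * (a^2 / (2 * μ2) - b^2 / 2) / (2 * ν2)) * (s * s) by ring, hsq]
      field_simp
      ring
  have h5 : brE ![(0:ℝ), 0, t] ![a * s, b * s, 0] = ![-(b * s * t), a * s * t, 0] := by
    funext i; fin_cases i
    · show 0 * 0 - t * (b * s) = -(b * s * t); ring
    · show t * (a * s) - 0 * 0 = a * s * t; ring
    · rfl
  have h6 : B ![-(b * s * t), a * s * t, 0] ![a * s, b * s, 0] =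
      ![0, 0, (μ2 - 1) * t * (a^2 - b^2) / (2 * ν2 * ν1)] := by
    rw [hBf]; funext i; fin_cases i
    · show ((1 - μ2) * (a * s * t) * 0 - (1 + μ2) * 0 * (b * s)) / 2 = 0
      ring
    · show ((1 + μ2) * 0 * (a * s) + (1 - μ2) * (-(b * s * t)) * 0) / (2 * μ2) = 0
      ring
    · show (μ2 - 1) * (-(b * s * t) * (b * s) + a * s * t * (a * s)) / (2 * ν2) =
        (μ2 - 1) * t * (a^2 - b^2) / (2 * ν2 * ν1)
      rw [show (μ2 - 1) * (-(b * s * t) * (b * s) + a * s * t * (a * s)) / (2 * ν2)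
          = ((μ2 - 1) * t * (a^2 - b^2) / (2 * ν2)) * (s * s) by ring, hsq]
      ring
  have htt : B ![(0:ℝ), 0, t] ![(0:ℝ), 0, t] = ![0, 0, 0] := by
    rw [hBf]; funext i; fin_cases i
    · show ((1 - μ2) * 0 * t - (1 + μ2) * t * 0) / 2 = 0; ring
    · show ((1 + μ2) * t * 0 + (1 - μ2) * 0 * t) / (2 * μ2) = 0; ring
    · show (μ2 - 1) * (0 * 0 + 0 * 0) / (2 * ν2) = 0; ring
  -- assemble τ₂
  have hτ₂' : τ₂ = ![0, 0, (a - b) * (a + b) * (μ2 - 1)^2 * a * b / (ν1^2 * ν2^2)] := by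
    rw [hτ₂, hξ1, hξ2, hξ3, hτ', hKz, hK]
    simp only [hBz, hBz', hww, htt, h1, h2, h3, h4, h5, h6]
    funext i
    fin_cases i
    · show -(0 + 0 + 0 + 0 + 0 + ((0:ℝ) - 0 - 0)) = 0
      ring
    · show -(0 + 0 + 0 + 0 + 0 + ((0:ℝ) - 0 - 0)) = 0
      ring
    · show -(0 + 0 + 0 + 0
          + -((1 - μ2)^2 * t * (a^2 + μ2 * b^2)) / (4 * μ2 * ν2 * ν1)
          + (0 - (μ2 - 1) * (1 + μ2) * t * (a^2 - μ2 * b^2) / (4 * μ2 * ν2 * ν1)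
               - (μ2 - 1) * t * (a^2 - b^2) / (2 * ν2 * ν1)))
        = (a - b) * (a + b) * (μ2 - 1)^2 * a * b / (ν1^2 * ν2^2)
      rw [htdef]
      field_simp
      ring
  refine ⟨hτ₂', ?_⟩
  have hτzero : τ ≠ 0 ↔ (μ2 - 1) * a * b ≠ 0 := by
    rw [hτ']
    constructor
    · intro h hc
      apply h
      funext i
      fin_cases i <;> simp [htdef, hc]
    · intro h hc
      apply h
      have := congrFun hc 2
      rw [htdef] at this
      simpa [div_eq_zero_iff, hν1ne, hν2ne] using this
  have hτ₂zero : τ₂ = 0 ↔ (a - b) * (a + b) * (μ2 - 1)^2 * a * b = 0 := by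
    rw [hτ₂']
    constructor
    · intro h
      have := congrFun h 2
      simpa [div_eq_zero_iff, hν1ne, hν2ne, pow_eq_zero_iff] using this
    · intro h
      funext i
      fin_cases i <;> simp [h]
  rw [hτ₂zero, hτzero]
  constructor
  · rintro ⟨h2, h1⟩
    have hμ : μ2 - 1 ≠ 0 := fun hc => h1 (by rw [hc]; ring)
    have hab : a * b ≠ 0 := fun hc => h1 (by rw [mul_assoc, hc, mul_zero])
    refine ⟨?_, hab, fun hc => hμ (by rw [hc]; ring)⟩
    have hdiff : (a - b) * (a + b) = 0 := by
      by_contra hc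
      exact (mul_ne_zero (mul_ne_zero hc (pow_ne_zero 2 hμ)) hab)
        (by linear_combination h2)
    linear_combination hdiff
  · rintro ⟨hab2, hab, hμ⟩
    constructor
    · have : (a - b) * (a + b) = 0 := by linear_combination hab2
      rw [this]; ring
    · rw [mul_assoc]
      exact mul_ne_zero (sub_ne_zero.mpr hμ) hab
end
end

section
/- Let sol be the Lie algebra with basis (X₁,X₂,X₃) and brackets [X₃,X₁]=X₁, [X₃,X₂]=−X₂, with both metrics of the form diag(1,1,νᵢ), νᵢ>0. For the homomorphism ξ sending X₁↦0, X₂↦0, X₃↦aX₁+bX₂+γX₃, one has τ(ξ) = −(γa/ν₁)X₁ + (γb/ν₁)X₂ + ((a²−b²)/(ν₁ν₂))X₃; hence ξ is harmonic if and only if (a=b=0) or (γ=0 and a²=b²). -/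
noncomputable section

/-- The bracket of `sol`: `[X₃,X₁] = X₁`, `[X₃,X₂] = −X₂`. -/
def brS (u v : Fin 3 → ℝ) : Fin 3 → ℝ :=
  ![u 2 * v 0 - u 0 * v 2, u 1 * v 2 - u 2 * v 1, 0]

/-- For `sol` with metrics `diag(1,1,ν₁)`, `diag(1,1,ν₂)` and the homomorphism
`X₁↦0, X₂↦0, X₃↦aX₁+bX₂+γX₃`, one has
`τ(ξ) = −(γa/ν₁)X₁ + (γb/ν₁)X₂ + ((a²−b²)/(ν₁ν₂))X₃`, hence `ξ` is harmonic
iff `(a=b=0)` or `(γ=0 and a²=b²)`. -/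
theorem sol_harmonic
    (ν1 ν2 : ℝ) (hν1 : 0 < ν1) (hν2 : 0 < ν2)
    (a b γ : ℝ)
    (ξ : (Fin 3 → ℝ) → (Fin 3 → ℝ))
    (hξ : ξ = fun u => ![a * u 2, b * u 2, γ * u 2])
    (B : (Fin 3 → ℝ) → (Fin 3 → ℝ) → (Fin 3 → ℝ))
    -- B is the Levi-Civita product of the target metric diag(1,1,ν₂)
    (hB : ∀ u v w, 2 * ip ![1, 1, ν2] (B u v) w =
      ip ![1, 1, ν2] (brS u v) w + ip ![1, 1, ν2] (brS w u) v + ip ![1, 1, ν2] (brS w v) u)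
    (τ : Fin 3 → ℝ)
    -- τ(ξ) = Σ_i B_{ξ(e_i)} ξ(e_i) for the orthonormal basis of diag(1,1,ν₁)
    (hτ : τ = B (ξ ![1, 0, 0]) (ξ ![1, 0, 0])
            + B (ξ ![0, 1, 0]) (ξ ![0, 1, 0])
            + B (ξ ![0, 0, Real.sqrt (1/ν1)]) (ξ ![0, 0, Real.sqrt (1/ν1)])) :
    τ = ![-(γ * a / ν1), γ * b / ν1, (a^2 - b^2) / (ν1 * ν2)] ∧
      (τ = 0 ↔ ((a = 0 ∧ b = 0) ∨ (γ = 0 ∧ a^2 = b^2))) := by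
  have hν1' : ν1 ≠ 0 := hν1.ne'
  have hν2' : ν2 ≠ 0 := hν2.ne'
  have hs : Real.sqrt (1/ν1) * Real.sqrt (1/ν1) = 1/ν1 :=
    Real.mul_self_sqrt (by positivity)
  have c0 : ∀ u v : Fin 3 → ℝ, B u v 0 = -(u 0 * v 2) := by
    intro u v
    have h := hB u v ![1, 0, 0]
    simp [ip, brS] at h
    linarith
  have c1 : ∀ u v : Fin 3 → ℝ, B u v 1 = u 1 * v 2 := by
    intro u v
    have h := hB u v ![0, 1, 0]
    simp [ip, brS] at h
    linarith
  have c2 : ∀ u v : Fin 3 → ℝ, B u v 2 = (u 0 * v 0 - u 1 * v 1) / ν2 := by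
    intro u v
    have h := hB u v ![0, 0, 1]
    simp [ip, brS] at h
    field_simp
    linarith
  have hs2 : Real.sqrt (1/ν1) ^ 2 = 1/ν1 := Real.sq_sqrt (by positivity)
  have hform : τ = ![-(γ * a / ν1), γ * b / ν1, (a^2 - b^2) / (ν1 * ν2)] := by
    subst hξ hτ
    funext i
    set s : ℝ := Real.sqrt (1/ν1) with hsdef
    fin_cases i
    · show B ![a*0, b*0, γ*0] ![a*0, b*0, γ*0] 0 + B ![a*0, b*0, γ*0] ![a*0, b*0, γ*0] 0
        + B ![a*s, b*s, γ*s] ![a*s, b*s, γ*s] 0 = -(γ * a / ν1)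
      simp only [c0]
      simp only [Matrix.cons_val_zero, Matrix.cons_val_one, Matrix.head_cons,
        Matrix.cons_val_two, Matrix.tail_cons]
      linear_combination (-(a * γ)) * hs2
    · show B ![a*0, b*0, γ*0] ![a*0, b*0, γ*0] 1 + B ![a*0, b*0, γ*0] ![a*0, b*0, γ*0] 1
        + B ![a*s, b*s, γ*s] ![a*s, b*s, γ*s] 1 = γ * b / ν1
      simp only [c1]
      simp only [Matrix.cons_val_zero, Matrix.cons_val_one, Matrix.head_cons,
        Matrix.cons_val_two, Matrix.tail_cons]
      linear_combination (b * γ) * hs2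
    · show B ![a*0, b*0, γ*0] ![a*0, b*0, γ*0] 2 + B ![a*0, b*0, γ*0] ![a*0, b*0, γ*0] 2
        + B ![a*s, b*s, γ*s] ![a*s, b*s, γ*s] 2 = (a^2 - b^2) / (ν1 * ν2)
      simp only [c2]
      simp only [Matrix.cons_val_zero, Matrix.cons_val_one, Matrix.head_cons,
        Matrix.cons_val_two, Matrix.tail_cons]
      linear_combination ((a^2 - b^2) / ν2) * hs2
  refine ⟨hform, ?_⟩
  rw [hform]
  constructor
  · intro h
    have h0 := congrFun h 0
    have h1 := congrFun h 1
    have h2 := congrFun h 2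
    simp [div_eq_zero_iff, hν1', hν2', sub_eq_zero, neg_eq_zero] at h0 h1 h2
    by_cases hγ : γ = 0
    · exact Or.inr ⟨hγ, h2⟩
    · rcases h0 with h | h
      · exact absurd h hγ
      rcases h1 with h' | h'
      · exact absurd h' hγ
      exact Or.inl ⟨h, h'⟩
  · rintro (⟨rfl, rfl⟩ | ⟨rfl, hab⟩)
    · funext i; fin_cases i <;> simp
    · funext i; fin_cases i <;> simp [hab]
end
end

section
/- Let sol carry both metrics diag(1,1,νᵢ), νᵢ>0, and let ξ map X₁↦0, X₂↦0, X₃↦aX₁+bX₂+γX₃ with γ²≠1. Then τ₂(ξ) = 0 if and only if τ(ξ) = 0; i.e., this homomorphism is biharmonic exactly when it is harmonic. -/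
noncomputable section

/-- For `sol` with metrics `diag(1,1,ν₁)`, `diag(1,1,ν₂)` and the homomorphism
`X₁↦0, X₂↦0, X₃↦aX₁+bX₂+γX₃` with `γ² ≠ 1`, `ξ` is biharmonic iff it is harmonic. -/
theorem sol_biharmonic_iff_harmonic
    (ν1 ν2 : ℝ) (hν1 : 0 < ν1) (hν2 : 0 < ν2)
    (a b γ : ℝ) (hγ : γ^2 ≠ 1)
    (ξ : (Fin 3 → ℝ) → (Fin 3 → ℝ))
    (hξ : ξ = fun u => ![a * u 2, b * u 2, γ * u 2])
    (B : (Fin 3 → ℝ) → (Fin 3 → ℝ) → (Fin 3 → ℝ))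
    -- B is the Levi-Civita product of the target metric diag(1,1,ν₂)
    (hB : ∀ u v w, 2 * ip ![1, 1, ν2] (B u v) w =
      ip ![1, 1, ν2] (brS u v) w + ip ![1, 1, ν2] (brS w u) v + ip ![1, 1, ν2] (brS w v) u)
    -- K is the curvature of the target: K(u,v)w = B_u B_v w − B_v B_u w − B_{[u,v]} w
    (K : (Fin 3 → ℝ) → (Fin 3 → ℝ) → (Fin 3 → ℝ) → (Fin 3 → ℝ))
    (hK : ∀ u v w, K u v w = B u (B v w) - B v (B u w) - B (brS u v) w)
    (τ τ₂ : Fin 3 → ℝ)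
    -- τ(ξ) = Σ_i B_{ξ(e_i)} ξ(e_i) for the orthonormal basis e of diag(1,1,ν₁)
    (hτ : τ = B (ξ ![1, 0, 0]) (ξ ![1, 0, 0])
            + B (ξ ![0, 1, 0]) (ξ ![0, 1, 0])
            + B (ξ ![0, 0, Real.sqrt (1/ν1)]) (ξ ![0, 0, Real.sqrt (1/ν1)]))
    -- τ₂(ξ) = −Σ_i (B_{ξ(e_i)} B_{ξ(e_i)} τ(ξ) + K(τ(ξ),ξ(e_i))ξ(e_i))
    (hτ₂ : τ₂ = -(B (ξ ![1, 0, 0]) (B (ξ ![1, 0, 0]) τ) + K τ (ξ ![1, 0, 0]) (ξ ![1, 0, 0])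
      + B (ξ ![0, 1, 0]) (B (ξ ![0, 1, 0]) τ) + K τ (ξ ![0, 1, 0]) (ξ ![0, 1, 0])
      + B (ξ ![0, 0, Real.sqrt (1/ν1)]) (B (ξ ![0, 0, Real.sqrt (1/ν1)]) τ)
        + K τ (ξ ![0, 0, Real.sqrt (1/ν1)]) (ξ ![0, 0, Real.sqrt (1/ν1)]))) :
    τ₂ = 0 ↔ τ = 0 := by

  have hB' : ∀ u v, B u v = ![-(u 0 * v 2), u 1 * v 2, (u 0 * v 0 - u 1 * v 1)/ν2] := by
    intro u v
    have h0 := hB u v ![1,0,0]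
    have h1 := hB u v ![0,1,0]
    have h2 := hB u v ![0,0,1]
    simp [ip, brS] at h0 h1 h2
    funext i
    fin_cases i <;> simp
    · linarith
    · linarith
    · field_simp
      linarith
  have hν1' : ν1 ≠ 0 := ne_of_gt hν1
  have hν2' : ν2 ≠ 0 := ne_of_gt hν2
  have hspos : (0:ℝ) < Real.sqrt (1/ν1) ^ 2 := by
    have : (0:ℝ) < Real.sqrt (1/ν1) := Real.sqrt_pos.mpr (by positivity)
    positivity
  subst hξ
  have hτ' : τ = ![-(a*γ*Real.sqrt (1/ν1)^2), b*γ*Real.sqrt (1/ν1)^2,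
      (a^2-b^2)*Real.sqrt (1/ν1)^2/ν2] := by
    rw [hτ]
    funext i
    fin_cases i <;> simp [hB', Pi.add_apply] <;> ring
  have hτ₂' : τ₂ = ![(-(γ^3*a) - 2*γ*a*(a^2-b^2)/ν2) * Real.sqrt (1/ν1)^4,
      (γ^3*b - 2*γ*b*(a^2-b^2)/ν2) * Real.sqrt (1/ν1)^4,
      (γ^2*(a^2-b^2)/ν2 + 2*(a^4-b^4)/ν2^2) * Real.sqrt (1/ν1)^4] := by
    rw [hτ₂, hτ']
    funext i
    fin_cases i <;>
      simp [hK, hB', brS, Pi.add_apply, Pi.neg_apply, Pi.sub_apply] <;> ring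
  rw [hτ', hτ₂']
  have hs4 : (0:ℝ) < Real.sqrt (1/ν1) ^ 4 := by positivity
  constructor
  · intro h
    have h0 : (-(γ^3*a) - 2*γ*a*(a^2-b^2)/ν2) * Real.sqrt (1/ν1)^4 = 0 := by
      simpa using congrFun h 0
    have h1 : (γ^3*b - 2*γ*b*(a^2-b^2)/ν2) * Real.sqrt (1/ν1)^4 = 0 := by
      simpa using congrFun h 1
    have h2 : (γ^2*(a^2-b^2)/ν2 + 2*(a^4-b^4)/ν2^2) * Real.sqrt (1/ν1)^4 = 0 := by
      simpa using congrFun h 2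
    have e0 : γ^3*a*ν2 + 2*γ*a*(a^2-b^2) = 0 := by
      have := (mul_eq_zero.mp h0).resolve_right (ne_of_gt hs4)
      field_simp at this
      linear_combination -this
    have e1 : γ^3*b*ν2 - 2*γ*b*(a^2-b^2) = 0 := by
      have := (mul_eq_zero.mp h1).resolve_right (ne_of_gt hs4)
      field_simp at this
      linear_combination this
    have e2 : (a^2-b^2) * (γ^2*ν2 + 2*(a^2+b^2)) = 0 := by
      have := (mul_eq_zero.mp h2).resolve_right (ne_of_gt hs4)
      field_simp at this
      have this2 : ((a^2-b^2) * (γ^2*ν2 + 2*(a^2+b^2))) * ν2 = 0 := by linear_combination ν2 * this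
      exact (mul_eq_zero.mp this2).resolve_right hν2'
    have hab : a^2 - b^2 = 0 := by
      rcases mul_eq_zero.mp e2 with h' | h'
      · exact h'
      · have ha2 : a^2 = 0 := le_antisymm
          (by nlinarith [sq_nonneg γ, sq_nonneg b, mul_nonneg (sq_nonneg γ) hν2.le]) (sq_nonneg a)
        have hb2 : b^2 = 0 := le_antisymm
          (by nlinarith [sq_nonneg γ, sq_nonneg a, mul_nonneg (sq_nonneg γ) hν2.le]) (sq_nonneg b)
        linear_combination ha2 - hb2
    have hga : γ * a = 0 := by
      have e0' : (γ^3*a) * ν2 = 0 := by linear_combination e0 - 2*γ*a*hab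
      have e0'' : γ^3*a = 0 := (mul_eq_zero.mp e0').resolve_right hν2'
      have h3 : (γ*a)^3 = 0 := by linear_combination a^2 * e0''
      exact pow_eq_zero_iff three_ne_zero |>.mp h3
    have hgb : γ * b = 0 := by
      have e1' : (γ^3*b) * ν2 = 0 := by linear_combination e1 + 2*γ*b*hab
      have e1'' : γ^3*b = 0 := (mul_eq_zero.mp e1').resolve_right hν2'
      have h3 : (γ*b)^3 = 0 := by linear_combination b^2 * e1''
      exact pow_eq_zero_iff three_ne_zero |>.mp h3
    funext i
    fin_cases i
    · show -(a*γ*Real.sqrt (1/ν1)^2) = 0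
      linear_combination (-(Real.sqrt (1/ν1)^2)) * hga
    · show b*γ*Real.sqrt (1/ν1)^2 = 0
      linear_combination (Real.sqrt (1/ν1)^2) * hgb
    · show (a^2-b^2)*Real.sqrt (1/ν1)^2/ν2 = 0
      linear_combination (Real.sqrt (1/ν1)^2/ν2) * hab
  · intro h
    have h0 : -(a*γ*Real.sqrt (1/ν1)^2) = 0 := by simpa using congrFun h 0
    have h1 : b*γ*Real.sqrt (1/ν1)^2 = 0 := by simpa using congrFun h 1
    have h2 : (a^2-b^2)*Real.sqrt (1/ν1)^2/ν2 = 0 := by simpa using congrFun h 2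
    have hga : a * γ = 0 := by
      have : (a*γ) * Real.sqrt (1/ν1)^2 = 0 := by linear_combination -h0
      exact (mul_eq_zero.mp this).resolve_right (ne_of_gt hspos)
    have hgb : b * γ = 0 := by
      have : (b*γ) * Real.sqrt (1/ν1)^2 = 0 := by linear_combination h1
      exact (mul_eq_zero.mp this).resolve_right (ne_of_gt hspos)
    have hab : a^2 - b^2 = 0 := by
      field_simp at h2
      exact (mul_eq_zero.mp (by linear_combination h2 : (a^2-b^2) * Real.sqrt (1/ν1)^2 = 0)).resolve_right (ne_of_gt hspos)
    funext i
    fin_cases i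
    · show (-(γ^3*a) - 2*γ*a*(a^2-b^2)/ν2) * Real.sqrt (1/ν1)^4 = 0
      linear_combination (-(γ^2)*Real.sqrt (1/ν1)^4) * hga
        + (-(2*γ*a*Real.sqrt (1/ν1)^4)/ν2) * hab
    · show (γ^3*b - 2*γ*b*(a^2-b^2)/ν2) * Real.sqrt (1/ν1)^4 = 0
      linear_combination (γ^2*Real.sqrt (1/ν1)^4) * hgb
        + (-(2*γ*b*Real.sqrt (1/ν1)^4)/ν2) * hab
    · show (γ^2*(a^2-b^2)/ν2 + 2*(a^4-b^4)/ν2^2) * Real.sqrt (1/ν1)^4 = 0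
      linear_combination (γ^2*Real.sqrt (1/ν1)^4/ν2 + 2*(a^2+b^2)*Real.sqrt (1/ν1)^4/ν2^2) * hab
end
end

section
/- Let su(2) have basis (X₁,X₂,X₃) with [X₁,X₂]=X₃, [X₂,X₃]=X₁, [X₃,X₁]=X₂, source metric diag(λ₁,μ₁,ν₁) and target metric diag(λ₂,μ₂,ν₂). The rotation ξ₁(a): X₁↦X₁, X₂↦cos(a)X₂−sin(a)X₃, X₃↦sin(a)X₂+cos(a)X₃ has tension field τ(ξ₁(a)) = −(sin(a)cos(a)(μ₂−ν₂)(μ₁−ν₁)/(λ₂μ₁ν₁)) X₁. -/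
noncomputable section

/-- The bracket of `su(2)`: `[X₁,X₂]=X₃`, `[X₂,X₃]=X₁`, `[X₃,X₁]=X₂`. -/
def brSU (u v : Fin 3 → ℝ) : Fin 3 → ℝ :=
  ![u 1 * v 2 - u 2 * v 1, u 2 * v 0 - u 0 * v 2, u 0 * v 1 - u 1 * v 0]

/-- For `su(2)` with metrics `diag(λ₁,μ₁,ν₁)`, `diag(λ₂,μ₂,ν₂)`, the rotation
`ξ₁(a): X₁↦X₁, X₂↦cos(a)X₂−sin(a)X₃, X₃↦sin(a)X₂+cos(a)X₃` has tension field
`τ = −(sin(a)cos(a)(μ₂−ν₂)(μ₁−ν₁)/(λ₂μ₁ν₁)) X₁`. -/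
theorem su2_rotation_tension_field
    (l1 μ1 ν1 l2 μ2 ν2 : ℝ)
    (hl1 : 0 < l1) (hμ1 : 0 < μ1) (hν1 : 0 < ν1)
    (hl2 : 0 < l2) (hμ2 : 0 < μ2) (hν2 : 0 < ν2)
    (a : ℝ)
    (ξ : (Fin 3 → ℝ) → (Fin 3 → ℝ))
    (hξ : ξ = fun u => ![u 0, Real.cos a * u 1 + Real.sin a * u 2,
      -Real.sin a * u 1 + Real.cos a * u 2])
    (B : (Fin 3 → ℝ) → (Fin 3 → ℝ) → (Fin 3 → ℝ))
    -- B is the Levi-Civita product of the target metric diag(λ₂,μ₂,ν₂)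
    (hB : ∀ u v w, 2 * ip ![l2, μ2, ν2] (B u v) w =
      ip ![l2, μ2, ν2] (brSU u v) w + ip ![l2, μ2, ν2] (brSU w u) v
        + ip ![l2, μ2, ν2] (brSU w v) u)
    (τ : Fin 3 → ℝ)
    -- τ(ξ) = Σ_i B_{ξ(e_i)} ξ(e_i) for the orthonormal basis of diag(λ₁,μ₁,ν₁)
    (hτ : τ = B (ξ ![Real.sqrt (1/l1), 0, 0]) (ξ ![Real.sqrt (1/l1), 0, 0])
            + B (ξ ![0, Real.sqrt (1/μ1), 0]) (ξ ![0, Real.sqrt (1/μ1), 0])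
            + B (ξ ![0, 0, Real.sqrt (1/ν1)]) (ξ ![0, 0, Real.sqrt (1/ν1)])) :
    τ = ![-(Real.sin a * Real.cos a * (μ2 - ν2) * (μ1 - ν1) / (l2 * μ1 * ν1)), 0, 0] := by
  have comp : ∀ u : Fin 3 → ℝ, B u u =
      ![u 1 * u 2 * (ν2 - μ2) / l2, u 0 * u 2 * (l2 - ν2) / μ2,
        u 0 * u 1 * (μ2 - l2) / ν2] := by
    intro u
    funext j
    fin_cases j
    · have h := hB u u ![1, 0, 0]
      simp [ip, brSU] at h ⊢
      field_simp
      linarith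
    · have h := hB u u ![0, 1, 0]
      simp [ip, brSU] at h ⊢
      field_simp
      linarith
    · have h := hB u u ![0, 0, 1]
      simp [ip, brSU] at h ⊢
      field_simp
      linarith
  have hq2 : Real.sqrt (1/μ1) * Real.sqrt (1/μ1) = 1/μ1 :=
    Real.mul_self_sqrt (by positivity)
  have hq3 : Real.sqrt (1/ν1) * Real.sqrt (1/ν1) = 1/ν1 :=
    Real.mul_self_sqrt (by positivity)
  subst hξ hτ
  funext j
  fin_cases j <;>
    simp [comp, Pi.add_apply] <;>
    field_simp <;>
    simp only [Real.sq_sqrt hμ1.le, Real.sq_sqrt hν1.le] at * <;>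
    nlinarith [hq2, hq3, hμ1.ne', hν1.ne']
end
end

section
/- With su(2) metrics diag(λ₁,μ₁,ν₁) and diag(λ₂,μ₂,ν₂) and ξ₁(a) the rotation in the (X₂,X₃)-plane by angle a, if μ₂≠ν₂ and μ₁≠ν₁ then ξ₁(a) is harmonic iff sin(2a)=0, and ξ₁(a) is biharmonic but not harmonic iff cos²(a)=1/2. -/
set_option maxHeartbeats 4000000
noncomputable section

/-- For `su(2)` with metrics `diag(λ₁,μ₁,ν₁)`, `diag(λ₂,μ₂,ν₂)`, with `μ₂≠ν₂`, `μ₁≠ν₁`,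
the rotation `ξ₁(a)` in the `(X₂,X₃)`-plane is harmonic iff `sin(2a)=0`, and
biharmonic not harmonic iff `cos²(a)=1/2`. -/
theorem su2_rotation_harmonic_biharmonic
    (l1 μ1 ν1 l2 μ2 ν2 : ℝ)
    (hl1 : 0 < l1) (hμ1 : 0 < μ1) (hν1 : 0 < ν1)
    (hl2 : 0 < l2) (hμ2 : 0 < μ2) (hν2 : 0 < ν2)
    (h2 : μ2 ≠ ν2) (h1 : μ1 ≠ ν1)
    (a : ℝ)
    (ξ : (Fin 3 → ℝ) → (Fin 3 → ℝ))
    (hξ : ξ = fun u => ![u 0, Real.cos a * u 1 + Real.sin a * u 2,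
      -Real.sin a * u 1 + Real.cos a * u 2])
    (B : (Fin 3 → ℝ) → (Fin 3 → ℝ) → (Fin 3 → ℝ))
    -- B is the Levi-Civita product of the target metric diag(λ₂,μ₂,ν₂)
    (hB : ∀ u v w, 2 * ip ![l2, μ2, ν2] (B u v) w =
      ip ![l2, μ2, ν2] (brSU u v) w + ip ![l2, μ2, ν2] (brSU w u) v
        + ip ![l2, μ2, ν2] (brSU w v) u)
    -- K is the curvature of the target: K(u,v)w = B_u B_v w − B_v B_u w − B_{[u,v]} w
    (K : (Fin 3 → ℝ) → (Fin 3 → ℝ) → (Fin 3 → ℝ) → (Fin 3 → ℝ))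
    (hK : ∀ u v w, K u v w = B u (B v w) - B v (B u w) - B (brSU u v) w)
    (τ τ₂ : Fin 3 → ℝ)
    -- τ(ξ) = Σ_i B_{ξ(e_i)} ξ(e_i) for the orthonormal basis e of diag(λ₁,μ₁,ν₁)
    (hτ : τ = B (ξ ![Real.sqrt (1/l1), 0, 0]) (ξ ![Real.sqrt (1/l1), 0, 0])
            + B (ξ ![0, Real.sqrt (1/μ1), 0]) (ξ ![0, Real.sqrt (1/μ1), 0])
            + B (ξ ![0, 0, Real.sqrt (1/ν1)]) (ξ ![0, 0, Real.sqrt (1/ν1)]))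
    -- τ₂(ξ) = −Σ_i (B_{ξ(e_i)} B_{ξ(e_i)} τ(ξ) + K(τ(ξ),ξ(e_i))ξ(e_i))
    (hτ₂ : τ₂ = -(B (ξ ![Real.sqrt (1/l1), 0, 0]) (B (ξ ![Real.sqrt (1/l1), 0, 0]) τ)
        + K τ (ξ ![Real.sqrt (1/l1), 0, 0]) (ξ ![Real.sqrt (1/l1), 0, 0])
      + B (ξ ![0, Real.sqrt (1/μ1), 0]) (B (ξ ![0, Real.sqrt (1/μ1), 0]) τ)
        + K τ (ξ ![0, Real.sqrt (1/μ1), 0]) (ξ ![0, Real.sqrt (1/μ1), 0])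
      + B (ξ ![0, 0, Real.sqrt (1/ν1)]) (B (ξ ![0, 0, Real.sqrt (1/ν1)]) τ)
        + K τ (ξ ![0, 0, Real.sqrt (1/ν1)]) (ξ ![0, 0, Real.sqrt (1/ν1)]))) :
    (τ = 0 ↔ Real.sin (2 * a) = 0) ∧
      ((τ₂ = 0 ∧ τ ≠ 0) ↔ Real.cos a ^ 2 = 1/2) := by
  -- explicit formula for the Levi-Civita product
  have hl2' : l2 ≠ 0 := ne_of_gt hl2
  have hμ2' : μ2 ≠ 0 := ne_of_gt hμ2
  have hν2' : ν2 ≠ 0 := ne_of_gt hν2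
  have hBval : ∀ u v : Fin 3 → ℝ, B u v =
      ![(u 1 * v 2 - u 2 * v 1) / 2 + (ν2 - μ2) * (u 1 * v 2 + u 2 * v 1) / (2 * l2),
        (u 2 * v 0 - u 0 * v 2) / 2 + (l2 - ν2) * (u 2 * v 0 + u 0 * v 2) / (2 * μ2),
        (u 0 * v 1 - u 1 * v 0) / 2 + (μ2 - l2) * (u 0 * v 1 + u 1 * v 0) / (2 * ν2)] := by
    intro u v
    funext k
    fin_cases k
    · have h := hB u v ![1, 0, 0]
      simp [ip, brSU] at h ⊢
      field_simp
      linarith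
    · have h := hB u v ![0, 1, 0]
      simp [ip, brSU] at h ⊢
      field_simp
      linarith
    · have h := hB u v ![0, 0, 1]
      simp [ip, brSU] at h ⊢
      field_simp
      linarith
  have hsq : Real.sqrt (1/μ1) * Real.sqrt (1/μ1) = 1/μ1 :=
    Real.mul_self_sqrt (by positivity)
  have hsr : Real.sqrt (1/ν1) * Real.sqrt (1/ν1) = 1/ν1 :=
    Real.mul_self_sqrt (by positivity)
  have key1 : (1:ℝ)/μ1 - 1/ν1 ≠ 0 := by
    intro h
    apply h1
    have : (1:ℝ)/μ1 = 1/ν1 := by linarith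
    field_simp at this
    linarith
  have hτval : τ = ![(μ2 - ν2) * Real.cos a * Real.sin a *
      (Real.sqrt (1/μ1) * Real.sqrt (1/μ1) - Real.sqrt (1/ν1) * Real.sqrt (1/ν1)) / l2,
      0, 0] := by
    rw [hτ, hξ]
    funext k
    fin_cases k <;> simp [hBval] <;> ring
  have hC : (μ2 - ν2) * ((1:ℝ)/μ1 - 1/ν1) / l2 ≠ 0 :=
    div_ne_zero (mul_ne_zero (sub_ne_zero.mpr h2) key1) hl2'
  have Hτ : τ = ![((μ2 - ν2) * ((1:ℝ)/μ1 - 1/ν1) / l2) * (Real.cos a * Real.sin a), 0, 0] := by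
    rw [hτval, hsq, hsr]
    funext k
    fin_cases k <;> simp <;> ring
  have e1 : τ = 0 ↔ Real.cos a * Real.sin a = 0 := by
    rw [Hτ]
    constructor
    · intro h
      have h0 := congrFun h 0
      simp only [Matrix.cons_val_zero, Pi.zero_apply] at h0
      exact (mul_eq_zero.mp h0).resolve_left hC
    · intro h
      rw [h]
      funext k
      fin_cases k <;> simp
  have hτ₂val : τ₂ = ![(μ2 - ν2)^2 * Real.cos a * Real.sin a * (Real.sin a^2 - Real.cos a^2) *
      (Real.sqrt (1/μ1) * Real.sqrt (1/μ1) - Real.sqrt (1/ν1) * Real.sqrt (1/ν1))^2 / l2^2,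
      0, 0] := by
    rw [hτ₂]
    simp only [hK, hτval, hξ]
    funext k
    fin_cases k <;> simp [hBval, brSU] <;> ring
  have hD : (μ2 - ν2)^2 * ((1:ℝ)/μ1 - 1/ν1)^2 / l2^2 ≠ 0 := by
    apply div_ne_zero
    · exact mul_ne_zero (pow_ne_zero _ (sub_ne_zero.mpr h2)) (pow_ne_zero _ key1)
    · positivity
  have Hτ₂ : τ₂ = ![((μ2 - ν2)^2 * ((1:ℝ)/μ1 - 1/ν1)^2 / l2^2) *
      (Real.cos a * Real.sin a * (Real.sin a^2 - Real.cos a^2)), 0, 0] := by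
    rw [hτ₂val, hsq, hsr]
    funext k
    fin_cases k <;> simp <;> ring
  have e2 : τ₂ = 0 ↔ Real.cos a * Real.sin a * (Real.sin a^2 - Real.cos a^2) = 0 := by
    rw [Hτ₂]
    constructor
    · intro h
      have h0 := congrFun h 0
      simp only [Matrix.cons_val_zero, Pi.zero_apply] at h0
      exact (mul_eq_zero.mp h0).resolve_left hD
    · intro h
      rw [h]
      funext k
      fin_cases k <;> simp
  constructor
  · rw [e1, Real.sin_two_mul]
    constructor
    · intro h; linear_combination 2 * h
    · intro h; linear_combination h / 2
  · simp only [ne_eq, e2, e1]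
    constructor
    · rintro ⟨h0, hne⟩
      have hp := Real.sin_sq_add_cos_sq a
      rcases mul_eq_zero.mp h0 with h0 | h0
      · exact absurd h0 hne
      · linarith
    · intro h
      have hp := Real.sin_sq_add_cos_sq a
      have hc : Real.cos a ≠ 0 := by
        intro hc
        rw [hc] at h
        norm_num at h
      have hs : Real.sin a ≠ 0 := by
        intro hs
        rw [hs] at hp
        nlinarith
      refine ⟨?_, mul_ne_zero hc hs⟩
      have : Real.sin a^2 - Real.cos a^2 = 0 := by nlinarith
      rw [this]
      ring
end
end

section
/- Let sl(2,ℝ) have basis (X₁,X₂,X₃) with [X₁,X₂]=−X₃, [X₂,X₃]=X₁, [X₃,X₁]=X₂, with metrics diag(λ₁,μ₁,ν₁) and diag(λ₂,μ₂,ν₂) (all entries positive). The hyperbolic boost ξ₁(a): X₁↦X₁, X₂↦cosh(a)X₂+sinh(a)X₃, X₃↦sinh(a)X₂+cosh(a)X₃ satisfies τ(ξ₁(a)) = −(cosh(a)sinh(a)(μ₂+ν₂)(μ₁+ν₁)/(λ₂μ₁ν₁)) X₁; consequently ξ₁(a) is harmonic if and only if a = 0. -/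
noncomputable section

/-- The bracket of `sl(2,ℝ)`: `[X₁,X₂]=−X₃`, `[X₂,X₃]=X₁`, `[X₃,X₁]=X₂`. -/
def brSL (u v : Fin 3 → ℝ) : Fin 3 → ℝ :=
  ![u 1 * v 2 - u 2 * v 1, u 2 * v 0 - u 0 * v 2, u 1 * v 0 - u 0 * v 1]

set_option maxHeartbeats 1600000 in
/-- For `sl(2,ℝ)` with metrics `diag(λ₁,μ₁,ν₁)`, `diag(λ₂,μ₂,ν₂)`, the boost
`ξ₁(a): X₁↦X₁, X₂↦cosh(a)X₂+sinh(a)X₃, X₃↦sinh(a)X₂+cosh(a)X₃` satisfies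
`τ = −(cosh(a)sinh(a)(μ₂+ν₂)(μ₁+ν₁)/(λ₂μ₁ν₁)) X₁`; hence it is harmonic iff `a=0`. -/
theorem sl2_boost_tension_field
    (l1 μ1 ν1 l2 μ2 ν2 : ℝ)
    (hl1 : 0 < l1) (hμ1 : 0 < μ1) (hν1 : 0 < ν1)
    (hl2 : 0 < l2) (hμ2 : 0 < μ2) (hν2 : 0 < ν2)
    (a : ℝ)
    (ξ : (Fin 3 → ℝ) → (Fin 3 → ℝ))
    (hξ : ξ = fun u => ![u 0, Real.cosh a * u 1 + Real.sinh a * u 2,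
      Real.sinh a * u 1 + Real.cosh a * u 2])
    (B : (Fin 3 → ℝ) → (Fin 3 → ℝ) → (Fin 3 → ℝ))
    -- B is the Levi-Civita product of the target metric diag(λ₂,μ₂,ν₂)
    (hB : ∀ u v w, 2 * ip ![l2, μ2, ν2] (B u v) w =
      ip ![l2, μ2, ν2] (brSL u v) w + ip ![l2, μ2, ν2] (brSL w u) v
        + ip ![l2, μ2, ν2] (brSL w v) u)
    (τ : Fin 3 → ℝ)
    -- τ(ξ) = Σ_i B_{ξ(e_i)} ξ(e_i) for the orthonormal basis of diag(λ₁,μ₁,ν₁)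
    (hτ : τ = B (ξ ![Real.sqrt (1/l1), 0, 0]) (ξ ![Real.sqrt (1/l1), 0, 0])
            + B (ξ ![0, Real.sqrt (1/μ1), 0]) (ξ ![0, Real.sqrt (1/μ1), 0])
            + B (ξ ![0, 0, Real.sqrt (1/ν1)]) (ξ ![0, 0, Real.sqrt (1/ν1)])) :
    τ = ![-(Real.cosh a * Real.sinh a * (μ2 + ν2) * (μ1 + ν1) / (l2 * μ1 * ν1)), 0, 0] ∧
      (τ = 0 ↔ a = 0) := by
  set c := Real.cosh a with hc
  set s := Real.sinh a with hs
  set q := Real.sqrt (1/μ1) with hq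
  set r := Real.sqrt (1/ν1) with hr
  have hq2 : μ1 * (q * q) = 1 := by
    rw [Real.mul_self_sqrt (by positivity)]; field_simp
  have hr2 : ν1 * (r * r) = 1 := by
    rw [Real.mul_self_sqrt (by positivity)]; field_simp
  subst hξ
  simp only [Matrix.cons_val_zero, Matrix.cons_val_one, Matrix.head_cons,
    Matrix.cons_val_two, Matrix.tail_cons, mul_zero, add_zero, zero_add] at hτ
  have key : ∀ k, τ k = B ![Real.sqrt (1/l1), 0, 0] ![Real.sqrt (1/l1), 0, 0] k
      + B ![0, c * q, s * q] ![0, c * q, s * q] k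
      + B ![0, s * r, c * r] ![0, s * r, c * r] k := by
    intro k; rw [hτ]; simp
  set u1 : Fin 3 → ℝ := ![Real.sqrt (1/l1), 0, 0] with hu1
  set u2 : Fin 3 → ℝ := ![0, c * q, s * q] with hu2
  set u3 : Fin 3 → ℝ := ![0, s * r, c * r] with hu3
  have b10 := hB u1 u1 ![1,0,0]
  have b20 := hB u2 u2 ![1,0,0]
  have b30 := hB u3 u3 ![1,0,0]
  have b11 := hB u1 u1 ![0,1,0]
  have b21 := hB u2 u2 ![0,1,0]
  have b31 := hB u3 u3 ![0,1,0]
  have b12 := hB u1 u1 ![0,0,1]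
  have b22 := hB u2 u2 ![0,0,1]
  have b32 := hB u3 u3 ![0,0,1]
  simp only [ip, brSL, hu1, hu2, hu3, Matrix.cons_val_zero, Matrix.cons_val_one,
    Matrix.head_cons, Matrix.cons_val_two, Matrix.tail_cons] at b10 b20 b30
  simp only [ip, brSL, hu1, hu2, hu3, Matrix.cons_val_zero, Matrix.cons_val_one,
    Matrix.head_cons, Matrix.cons_val_two, Matrix.tail_cons] at b11 b21 b31
  simp only [ip, brSL, hu1, hu2, hu3, Matrix.cons_val_zero, Matrix.cons_val_one,
    Matrix.head_cons, Matrix.cons_val_two, Matrix.tail_cons] at b12 b22 b32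
  have h0 := key 0
  have h1 := key 1
  have h2 := key 2
  rw [hu1, hu2, hu3] at h0 h1 h2
  have sum0 : 2 * l2 * τ 0 = -((μ2 + ν2) * (c * s) * (q*q + r*r)) * 2 := by
    linear_combination 2 * l2 * h0 + b10 + b20 + b30
  have ht0' : τ 0 * (l2 * μ1 * ν1) = -(c * s * (μ2 + ν2) * (μ1 + ν1)) := by
    linear_combination (μ1 * ν1 / 2) * sum0 - (c * s * (μ2 + ν2) * ν1) * hq2
      - (c * s * (μ2 + ν2) * μ1) * hr2
  have ht0 : τ 0 = -(c * s * (μ2 + ν2) * (μ1 + ν1) / (l2 * μ1 * ν1)) := by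
    rw [← neg_div, eq_div_iff (by positivity : (l2 * μ1 * ν1) ≠ 0)]
    linear_combination ht0'
  have sum1 : 2 * μ2 * τ 1 = 0 := by
    linear_combination 2 * μ2 * h1 + b11 + b21 + b31
  have ht1 : τ 1 = 0 := by
    rcases mul_eq_zero.mp (by linarith : (2 * μ2) * τ 1 = 0) with h | h
    · nlinarith
    · exact h
  have sum2 : 2 * ν2 * τ 2 = 0 := by
    linear_combination 2 * ν2 * h2 + b12 + b22 + b32
  have ht2 : τ 2 = 0 := by
    rcases mul_eq_zero.mp (by linarith : (2 * ν2) * τ 2 = 0) with h | h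
    · nlinarith
    · exact h
  have hτeq : τ = ![-(c * s * (μ2 + ν2) * (μ1 + ν1) / (l2 * μ1 * ν1)), 0, 0] := by
    funext k; fin_cases k
    · simpa using ht0
    · simpa using ht1
    · simpa using ht2
  refine ⟨hτeq, ?_, ?_⟩
  · intro hz
    have hz0 : τ 0 = 0 := by rw [hz]; rfl
    rw [ht0] at hz0
    have hcpos : 0 < c := Real.cosh_pos a
    have hs0 : s = 0 := by
      by_contra hsne
      have hd : (0:ℝ) < l2 * μ1 * ν1 := by positivity
      have : c * s * (μ2 + ν2) * (μ1 + ν1) = 0 := by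
        have h' := neg_eq_zero.mp hz0
        exact (div_eq_zero_iff.mp h').resolve_right (ne_of_gt hd)
      have hne : c * s * (μ2 + ν2) * (μ1 + ν1) ≠ 0 := by
        have : c * s ≠ 0 := mul_ne_zero (ne_of_gt hcpos) hsne
        positivity
      exact hne this
    rw [hs] at hs0
    exact Real.sinh_eq_zero.mp hs0
  · intro ha
    subst ha
    rw [hτeq]
    funext k; fin_cases k <;> simp [hs, Real.sinh_zero]
end
end

section
/- For sl(2,ℝ) with metrics diag(λ₁,μ₁,ν₁) and diag(λ₂,μ₂,ν₂) (positive entries), the boost ξ₁(a) (X₁↦X₁, X₂↦cosh(a)X₂+sinh(a)X₃, X₃↦sinh(a)X₂+cosh(a)X₃) is biharmonic if and only if it is harmonic, i.e., if and only if a=0. -/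
noncomputable section

set_option maxHeartbeats 2000000 in
/-- For `sl(2,ℝ)` with metrics `diag(λ₁,μ₁,ν₁)`, `diag(λ₂,μ₂,ν₂)`, the boost `ξ₁(a)` is
biharmonic iff it is harmonic, i.e. iff `a = 0`. -/
theorem sl2_boost_biharmonic_iff_harmonic
    (l1 μ1 ν1 l2 μ2 ν2 : ℝ)
    (hl1 : 0 < l1) (hμ1 : 0 < μ1) (hν1 : 0 < ν1)
    (hl2 : 0 < l2) (hμ2 : 0 < μ2) (hν2 : 0 < ν2)
    (a : ℝ)
    (ξ : (Fin 3 → ℝ) → (Fin 3 → ℝ))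
    (hξ : ξ = fun u => ![u 0, Real.cosh a * u 1 + Real.sinh a * u 2,
      Real.sinh a * u 1 + Real.cosh a * u 2])
    (B : (Fin 3 → ℝ) → (Fin 3 → ℝ) → (Fin 3 → ℝ))
    -- B is the Levi-Civita product of the target metric diag(λ₂,μ₂,ν₂)
    (hB : ∀ u v w, 2 * ip ![l2, μ2, ν2] (B u v) w =
      ip ![l2, μ2, ν2] (brSL u v) w + ip ![l2, μ2, ν2] (brSL w u) v
        + ip ![l2, μ2, ν2] (brSL w v) u)
    -- K is the curvature of the target: K(u,v)w = B_u B_v w − B_v B_u w − B_{[u,v]} w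
    (K : (Fin 3 → ℝ) → (Fin 3 → ℝ) → (Fin 3 → ℝ) → (Fin 3 → ℝ))
    (hK : ∀ u v w, K u v w = B u (B v w) - B v (B u w) - B (brSL u v) w)
    (τ τ₂ : Fin 3 → ℝ)
    -- τ(ξ) = Σ_i B_{ξ(e_i)} ξ(e_i) for the orthonormal basis e of diag(λ₁,μ₁,ν₁)
    (hτ : τ = B (ξ ![Real.sqrt (1/l1), 0, 0]) (ξ ![Real.sqrt (1/l1), 0, 0])
            + B (ξ ![0, Real.sqrt (1/μ1), 0]) (ξ ![0, Real.sqrt (1/μ1), 0])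
            + B (ξ ![0, 0, Real.sqrt (1/ν1)]) (ξ ![0, 0, Real.sqrt (1/ν1)]))
    -- τ₂(ξ) = −Σ_i (B_{ξ(e_i)} B_{ξ(e_i)} τ(ξ) + K(τ(ξ),ξ(e_i))ξ(e_i))
    (hτ₂ : τ₂ = -(B (ξ ![Real.sqrt (1/l1), 0, 0]) (B (ξ ![Real.sqrt (1/l1), 0, 0]) τ)
        + K τ (ξ ![Real.sqrt (1/l1), 0, 0]) (ξ ![Real.sqrt (1/l1), 0, 0])
      + B (ξ ![0, Real.sqrt (1/μ1), 0]) (B (ξ ![0, Real.sqrt (1/μ1), 0]) τ)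
        + K τ (ξ ![0, Real.sqrt (1/μ1), 0]) (ξ ![0, Real.sqrt (1/μ1), 0])
      + B (ξ ![0, 0, Real.sqrt (1/ν1)]) (B (ξ ![0, 0, Real.sqrt (1/ν1)]) τ)
        + K τ (ξ ![0, 0, Real.sqrt (1/ν1)]) (ξ ![0, 0, Real.sqrt (1/ν1)]))) :
    (τ₂ = 0 ↔ τ = 0) ∧ (τ = 0 ↔ a = 0) := by

  -- closed form of the Levi-Civita product B
  have hB0 : ∀ u v : Fin 3 → ℝ, B u v 0 =
      ((l2 - μ2 - ν2) * u 1 * v 2 - (l2 + μ2 + ν2) * u 2 * v 1) / (2*l2) := by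
    intro u v
    have h := hB u v ![1,0,0]
    simp [ip, brSL] at h
    field_simp
    linarith
  have hB1 : ∀ u v : Fin 3 → ℝ, B u v 1 =
      ((l2 + μ2 + ν2) * u 2 * v 0 + (l2 - μ2 + ν2) * u 0 * v 2) / (2*μ2) := by
    intro u v
    have h := hB u v ![0,1,0]
    simp [ip, brSL] at h
    field_simp
    linarith
  have hB2 : ∀ u v : Fin 3 → ℝ, B u v 2 =
      ((μ2 + ν2 - l2) * u 1 * v 0 + (μ2 - ν2 - l2) * u 0 * v 1) / (2*ν2) := by
    intro u v
    have h := hB u v ![0,0,1]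
    simp [ip, brSL] at h
    field_simp
    linarith
  subst hξ
  set c := Real.cosh a with hc
  set s := Real.sinh a with hs
  set q := Real.sqrt (1/μ1) with hqdef
  set r := Real.sqrt (1/ν1) with hrdef
  have hc1 : 1 ≤ c := Real.one_le_cosh a
  have hq0 : 0 < q := Real.sqrt_pos.mpr (by positivity)
  have hr0 : 0 < r := Real.sqrt_pos.mpr (by positivity)
  -- components of τ
  have ht0 : τ 0 = -(c * s * (μ2 + ν2) * (q^2 + r^2)) / l2 := by
    rw [hτ]
    simp only [Pi.add_apply, hB0]
    simp
    field_simp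
    ring
  have ht1 : τ 1 = 0 := by
    rw [hτ]
    simp only [Pi.add_apply, hB1]
    simp
  have ht2 : τ 2 = 0 := by
    rw [hτ]
    simp only [Pi.add_apply, hB2]
    simp
  -- components of τ₂
  have h20 : τ₂ 0 = ((μ2 + ν2) * (q^2 + r^2) * (c^2 + s^2) / l2) * τ 0 := by
    rw [hτ₂]
    simp only [hK, Pi.neg_apply, Pi.add_apply, Pi.sub_apply]
    simp [brSL, hB0, hB1, hB2, ht0, ht1, ht2]
    field_simp
    ring
  have h21 : τ₂ 1 = 0 := by
    rw [hτ₂]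
    simp only [hK, Pi.neg_apply, Pi.add_apply, Pi.sub_apply]
    simp [brSL, hB0, hB1, hB2, ht0, ht1, ht2]
  have h22 : τ₂ 2 = 0 := by
    rw [hτ₂]
    simp only [hK, Pi.neg_apply, Pi.add_apply, Pi.sub_apply]
    simp [brSL, hB0, hB1, hB2, ht0, ht1, ht2]
  have hfac : (0:ℝ) < (μ2 + ν2) * (q^2 + r^2) * (c^2 + s^2) / l2 := by positivity
  have htau_iff : τ = 0 ↔ τ 0 = 0 := by
    constructor
    · intro h; rw [h]; rfl
    · intro h
      funext i
      fin_cases i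
      · exact h
      · exact ht1
      · exact ht2
  have htau2_iff : τ₂ = 0 ↔ τ₂ 0 = 0 := by
    constructor
    · intro h; rw [h]; rfl
    · intro h
      funext i
      fin_cases i
      · exact h
      · exact h21
      · exact h22
  constructor
  · rw [htau_iff, htau2_iff, h20, mul_eq_zero]
    constructor
    · rintro (h | h)
      · exact absurd h (ne_of_gt hfac)
      · exact h
    · intro h; exact Or.inr h
  · rw [htau_iff, ht0]
    constructor
    · intro h
      have hc0 : 0 < c := lt_of_lt_of_le one_pos hc1
      have : c * s * (μ2 + ν2) * (q^2 + r^2) = 0 := by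
        field_simp at h
        linarith
      have hs0 : s = 0 := by
        by_contra hne
        have h1 : c * s * (μ2 + ν2) * (q^2 + r^2) ≠ 0 := by positivity
        exact h1 this
      rw [hs] at hs0
      exact Real.sinh_eq_zero.mp hs0
    · intro h
      rw [hs, h, Real.sinh_zero]
      ring
end
end

section
/- Let ξ: (g,⟨,⟩₁) → (h,⟨,⟩₂) be a homomorphism of metric Lie algebras with g unimodular, and for a basis (f₁,...,f_m) of h define the test matrix M with entries m_{ij} = tr(ξ*∘(ad_{f_i}+ad*_{f_i})∘ad_{f_j}∘ξ) − tr(ξ*∘ad_{[f_i,f_j]}∘ξ). If det(M) ≠ 0, then τ₂(ξ) = 0 implies τ(ξ) = 0 (so ξ is biharmonic iff harmonic). -/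
open RealInnerProductSpace

/-- If the test matrix `M` of a homomorphism `ξ` of metric Lie algebras (with unimodular
source) has nonzero determinant, then `τ₂(ξ) = 0` implies `τ(ξ) = 0`. -/
theorem test_matrix_det_ne_zero_biharmonic_iff_harmonic
    {g h : Type*} [NormedAddCommGroup g] [InnerProductSpace ℝ g] [FiniteDimensional ℝ g]
    [NormedAddCommGroup h] [InnerProductSpace ℝ h] [FiniteDimensional ℝ h]
    (Lg : g →ₗ[ℝ] g →ₗ[ℝ] g) (Lh : h →ₗ[ℝ] h →ₗ[ℝ] h)
    (hLg_alt : ∀ u, Lg u u = 0)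
    (hLg_jacobi : ∀ u v w, Lg u (Lg v w) + Lg v (Lg w u) + Lg w (Lg u v) = 0)
    (hLh_alt : ∀ u, Lh u u = 0)
    (hLh_jacobi : ∀ u v w, Lh u (Lh v w) + Lh v (Lh w u) + Lh w (Lh u v) = 0)
    (hg_unimodular : ∀ v, LinearMap.trace ℝ g (Lg v) = 0)
    (ξ : g →ₗ[ℝ] h)
    (hξ : ∀ u v, ξ (Lg u v) = Lh (ξ u) (ξ v))
    (τ τ₂ : h)
    -- the identity ⟨τ(ξ),u⟩ = tr(ξ* ∘ ad_u ∘ ξ)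
    (hτ : ∀ u : h, ⟪τ, u⟫ = LinearMap.trace ℝ g (LinearMap.adjoint ξ ∘ₗ Lh u ∘ₗ ξ))
    -- the identity ⟨τ₂(ξ),u⟩ = tr(ξ* ∘ (ad_u + ad_u*) ∘ ad_{τ(ξ)} ∘ ξ) − tr(ξ* ∘ ad_{[u,τ(ξ)]} ∘ ξ)
    (hτ₂ : ∀ u : h, ⟪τ₂, u⟫ =
      LinearMap.trace ℝ g
        (LinearMap.adjoint ξ ∘ₗ (Lh u + LinearMap.adjoint (Lh u)) ∘ₗ Lh τ ∘ₗ ξ) -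
      LinearMap.trace ℝ g (LinearMap.adjoint ξ ∘ₗ Lh (Lh u τ) ∘ₗ ξ))
    {m : ℕ} (f : Module.Basis (Fin m) ℝ h)
    (M : Matrix (Fin m) (Fin m) ℝ)
    (hM : ∀ i j, M i j =
      LinearMap.trace ℝ g
        (LinearMap.adjoint ξ ∘ₗ (Lh (f i) + LinearMap.adjoint (Lh (f i))) ∘ₗ Lh (f j) ∘ₗ ξ) -
      LinearMap.trace ℝ g (LinearMap.adjoint ξ ∘ₗ Lh (Lh (f i) (f j)) ∘ₗ ξ))
    (hdet : M.det ≠ 0) :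
    τ₂ = 0 → τ = 0 := by
  intro hτ₂0
  set c : Fin m → ℝ := fun j => f.repr τ j with hc
  have key : ∀ i, (∑ j, M i j * c j) = 0 := by
    intro i
    let T : h →ₗ[ℝ] ℝ :=
      { toFun := fun v =>
          LinearMap.trace ℝ g
            (LinearMap.adjoint ξ ∘ₗ (Lh (f i) + LinearMap.adjoint (Lh (f i))) ∘ₗ Lh v ∘ₗ ξ) -
          LinearMap.trace ℝ g (LinearMap.adjoint ξ ∘ₗ Lh (Lh (f i) v) ∘ₗ ξ)
        map_add' := by
          intro x y
          simp only [map_add, LinearMap.add_comp, LinearMap.comp_add]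
          ring
        map_smul' := by
          intro r x
          simp only [map_smul, LinearMap.smul_comp, LinearMap.comp_smul, RingHom.id_apply,
            smul_eq_mul]
          ring }
    have h1 : T τ = 0 := by
      have h2 := hτ₂ (f i)
      rw [hτ₂0, inner_zero_left] at h2
      exact (h2 ▸ rfl : T τ = (0:ℝ)) |>.trans rfl
    calc ∑ j, M i j * c j = T τ := by
          conv_rhs => rw [← f.sum_repr τ]
          rw [map_sum]
          refine Finset.sum_congr rfl fun j _ => ?_
          rw [map_smul, hM i j]
          simp [T, c, mul_comm, smul_eq_mul]
      _ = 0 := h1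
  have hmv : M.mulVec c = 0 := by
    funext i
    simpa [Matrix.mulVec, dotProduct] using key i
  have hc0 : c = 0 := Matrix.eq_zero_of_mulVec_eq_zero hdet hmv
  have : τ = ∑ j, c j • f j := (f.sum_repr τ).symm
  rw [this, hc0]
  simp
end

section
/- Let su(2) carry bi-invariant inner products: if ⟨,⟩₂ satisfies ⟨[u,v],w⟩₂ = −⟨v,[u,w]⟩₂ (ad-invariance) then every Lie algebra automorphism ξ: (su(2),⟨,⟩₁) → (su(2),⟨,⟩₂) with ⟨,⟩₁ arbitrary has τ(ξ) determined by ⟨τ(ξ),u⟩₂ = tr(ξ*∘ad_u∘ξ), and when ⟨,⟩₂ is a positive multiple of the Killing form inner product (i.e., diag(λ,λ,λ) in the standard basis), τ(ξ) = 0 for every automorphism ξ; that is, every automorphism into a bi-invariant metric is harmonic. -/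
noncomputable section

/-- Every Lie algebra automorphism `ξ : (su(2),⟨,⟩₁) → (su(2),diag(λ,λ,λ))` into the
bi-invariant metric `diag(λ,λ,λ)` is harmonic: `τ(ξ) = 0`. -/
theorem su2_automorphism_into_biinvariant_harmonic
    (lam : ℝ) (hlam : 0 < lam)
    -- an arbitrary inner product ⟨,⟩₁ on su(2): bilinear, symmetric, positive definite
    (ip1 : (Fin 3 → ℝ) →ₗ[ℝ] (Fin 3 → ℝ) →ₗ[ℝ] ℝ)
    (hip1_symm : ∀ u v, ip1 u v = ip1 v u)
    (hip1_pos : ∀ u, u ≠ 0 → 0 < ip1 u u)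
    -- an orthonormal basis of ⟨,⟩₁
    (e : Fin 3 → (Fin 3 → ℝ))
    (he : ∀ i j, ip1 (e i) (e j) = if i = j then 1 else 0)
    -- ξ is an automorphism of su(2)
    (ξ : (Fin 3 → ℝ) →ₗ[ℝ] (Fin 3 → ℝ))
    (hξ_bij : Function.Bijective ξ)
    (hξ_hom : ∀ u v, ξ (brSU u v) = brSU (ξ u) (ξ v))
    (B : (Fin 3 → ℝ) → (Fin 3 → ℝ) → (Fin 3 → ℝ))
    -- B is the Levi-Civita product of the target metric diag(λ,λ,λ)
    (hB : ∀ u v w, 2 * ip ![lam, lam, lam] (B u v) w =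
      ip ![lam, lam, lam] (brSU u v) w + ip ![lam, lam, lam] (brSU w u) v
        + ip ![lam, lam, lam] (brSU w v) u)
    (τ : Fin 3 → ℝ)
    -- τ(ξ) = Σ_i B_{ξ(e_i)} ξ(e_i)
    (hτ : τ = ∑ i, B (ξ (e i)) (ξ (e i))) :
    τ = 0 := by
  have key : ∀ u, B u u = 0 := by
    intro u
    have h := hB u u (B u u)
    simp only [ip, brSU] at h
    have hx : lam * (B u u 0 ^ 2 + B u u 1 ^ 2 + B u u 2 ^ 2) = 0 := by
      simp [Matrix.cons_val_zero, Matrix.cons_val_one, Matrix.head_cons] at h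
      nlinarith [h]
    have hsq : B u u 0 ^ 2 + B u u 1 ^ 2 + B u u 2 ^ 2 = 0 := by
      rcases mul_eq_zero.mp hx with h' | h'
      · exact absurd h' hlam.ne'
      · exact h'
    funext i
    fin_cases i
    · show B u u 0 = 0
      nlinarith [sq_nonneg (B u u 0), sq_nonneg (B u u 1), sq_nonneg (B u u 2)]
    · show B u u 1 = 0
      nlinarith [sq_nonneg (B u u 0), sq_nonneg (B u u 1), sq_nonneg (B u u 2)]
    · show B u u 2 = 0
      nlinarith [sq_nonneg (B u u 0), sq_nonneg (B u u 1), sq_nonneg (B u u 2)]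
  simp [hτ, key]
end
end
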